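/- Let ψ be a branching mechanism with ∫^∞ du/ψ(u) < ∞, let φ = ψ' ∘ ψ⁻¹, and for r, λ ≥ 0 let κ_r(λ, 0) be the solution of ∂κ_r/∂r = λ - ψ(κ_r) with κ₀ = 0, and set L_r(λ) = 1 - ψ(κ_r(λ,0))/λ. Then for all r, λ > 0: ∫₀^{-log L_r(λ)} dx / φ(λ(1 - e^{-x})) = r. -/

import Mathlib

open MeasureTheory Real Set intervalIntegral Filter Topology

lemma aux_exp_nonneg {x : ℝ} : 0 ≤ Real.exp (-x) - 1 + x := by
  nlinarith [Real.add_one_le_exp (-x)]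

lemma aux_exp_le_lin {x : ℝ} (hx : 0 ≤ x) : Real.exp (-x) - 1 + x ≤ x := by
  nlinarith [Real.exp_le_one_iff.2 (by linarith : -x ≤ 0)]

lemma aux_one_sub_exp_le {x : ℝ} : 1 - Real.exp (-x) ≤ x := by
  nlinarith [Real.add_one_le_exp (-x)]

lemma aux_one_sub_exp_le_one {x : ℝ} : 1 - Real.exp (-x) ≤ 1 := by
  nlinarith [Real.exp_pos (-x)]

lemma aux_one_sub_exp_nonneg {x : ℝ} (hx : 0 ≤ x) : 0 ≤ 1 - Real.exp (-x) := by
  nlinarith [Real.exp_le_one_iff.2 (by linarith : -x ≤ 0)]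

lemma aux_exp_le_sq {x : ℝ} (hx : 0 ≤ x) : Real.exp (-x) - 1 + x ≤ x^2/2 := by
  have key : ∀ y ∈ Set.Ici (0:ℝ), Real.exp (-y) - 1 + y - y^2/2 ≤ 0 := by
    have hd : ∀ y ∈ interior (Set.Ici (0:ℝ)),
        HasDerivAt (fun y => Real.exp (-y) - 1 + y - y^2/2) (1 - Real.exp (-y) - y) y := by
      intro y hy
      have h1 : HasDerivAt (fun y : ℝ => Real.exp (-y)) (-Real.exp (-y)) y := by
        simpa using (hasDerivAt_neg y).exp
      have := ((h1.sub_const 1).add (hasDerivAt_id y)).sub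
        ((hasDerivAt_pow 2 y).div_const 2)
      refine this.congr_deriv ?_
      ring_nf
    have hanti : AntitoneOn (fun y => Real.exp (-y) - 1 + y - y^2/2) (Set.Ici (0:ℝ)) := by
      refine antitoneOn_of_deriv_nonpos (convex_Ici 0) ?_ ?_ ?_
      · exact (((Real.continuous_exp.comp continuous_neg).sub continuous_const).add
          continuous_id).sub ((continuous_pow 2).div_const 2) |>.continuousOn
      · intro y hy
        exact (hd y hy).differentiableAt.differentiableWithinAt
      · intro y hy
        rw [(hd y hy).deriv]
        rw [interior_Ici] at hy
        nlinarith [aux_one_sub_exp_le (x := y)]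
    intro y hy
    have := hanti (self_mem_Ici) hy hy
    simpa using this
  have := key x hx
  linarith

lemma aux_exp_mono {a b : ℝ} (ha : 0 ≤ a) (hab : a ≤ b) :
    Real.exp (-a) - 1 + a ≤ Real.exp (-b) - 1 + b := by
  have h1 : Real.exp (-a) - Real.exp (-b) = Real.exp (-a) * (1 - Real.exp (-(b-a))) := by
    rw [mul_sub, mul_one, ← Real.exp_add]; ring_nf
  have h2 : 1 - Real.exp (-(b-a)) ≤ b - a := aux_one_sub_exp_le
  have h3 : Real.exp (-a) ≤ 1 := Real.exp_le_one_iff.2 (by linarith)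
  have h4 : 0 ≤ 1 - Real.exp (-(b-a)) := aux_one_sub_exp_nonneg (by linarith)
  nlinarith


noncomputable def Dfun (α β : ℝ) (ν : Measure ℝ) : ℝ → ℝ :=
  fun l => α + 2*β*l + ∫ r, r * (1 - Real.exp (-(l*r))) ∂ν

section nu
variable {ν : Measure ℝ} (hν0 : ν (Set.Iic 0) = 0)
  (hνint : Integrable (fun r => min r (r ^ 2)) ν)

include hν0 in
lemma nu_ae_pos : ∀ᵐ r ∂ν, 0 < r := by
  have hs : {a : ℝ | ¬ (0:ℝ) < a} = Set.Iic 0 := by ext r; simp [not_lt]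
  rw [ae_iff, hs, hν0]

include hν0 hνint in
lemma integrable_of_min_bound {g : ℝ → ℝ} (hg : AEStronglyMeasurable g ν) (C : ℝ)
    (hbd : ∀ r : ℝ, 0 < r → ‖g r‖ ≤ C * min r (r^2)) : Integrable g ν := by
  refine (hνint.const_mul C).mono' hg ?_
  filter_upwards [nu_ae_pos hν0] with r hr
  simpa using hbd r hr

include hν0 hνint in
lemma integrable_psi_term {l : ℝ} (hl : 0 ≤ l) :
    Integrable (fun r => Real.exp (-(l*r)) - 1 + l*r) ν := by
  refine integrable_of_min_bound hν0 hνint ?_ (max l (l^2)) ?_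
  · exact (((Real.continuous_exp.comp (continuous_const.mul continuous_id).neg).sub
      continuous_const).add (continuous_const.mul continuous_id)).aestronglyMeasurable
  · intro r hr
    have hlr : 0 ≤ l * r := mul_nonneg hl hr.le
    rw [Real.norm_eq_abs, abs_of_nonneg aux_exp_nonneg]
    rcases le_total r 1 with h1 | h1
    · have hmin : min r (r^2) = r^2 := min_eq_right (by nlinarith)
      rw [hmin]
      have := aux_exp_le_sq hlr
      have : Real.exp (-(l*r)) - 1 + l*r ≤ (l*r)^2/2 := this
      nlinarith [le_max_right l (l^2), le_max_left l (l^2), sq_nonneg r, sq_nonneg l]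
    · have hmin : min r (r^2) = r := min_eq_left (by nlinarith)
      rw [hmin]
      have := aux_exp_le_lin hlr
      nlinarith [le_max_left l (l^2)]

include hν0 hνint in
lemma integrable_D_term {b : ℝ} (hb : 0 ≤ b) :
    Integrable (fun r => r * (1 - Real.exp (-(b*r)))) ν := by
  refine integrable_of_min_bound hν0 hνint ?_ (max 1 b) ?_
  · exact (continuous_id.mul ((continuous_const.sub
      (Real.continuous_exp.comp (continuous_const.mul continuous_id).neg)))).aestronglyMeasurable
  · intro r hr
    have hbr : 0 ≤ b * r := mul_nonneg hb hr.le
    have h0 : 0 ≤ 1 - Real.exp (-(b*r)) := aux_one_sub_exp_nonneg hbr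
    rw [Real.norm_eq_abs, abs_of_nonneg (mul_nonneg hr.le h0)]
    rcases le_total r 1 with h1 | h1
    · have hmin : min r (r^2) = r^2 := min_eq_right (by nlinarith)
      rw [hmin]
      have h2 : 1 - Real.exp (-(b*r)) ≤ b*r := aux_one_sub_exp_le
      nlinarith [le_max_right 1 b]
    · have hmin : min r (r^2) = r := min_eq_left (by nlinarith)
      rw [hmin]
      have h2 : 1 - Real.exp (-(b*r)) ≤ 1 := aux_one_sub_exp_le_one
      nlinarith [le_max_left 1 b]

end nu

section psi
variable {α β : ℝ} {ν : Measure ℝ}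
  (hα : 0 ≤ α) (hβ : 0 ≤ β)
  (hν0 : ν (Set.Iic 0) = 0) (hνint : Integrable (fun r => min r (r ^ 2)) ν)
  {ψ ψ' ψinv : ℝ → ℝ}
  (hψ : ∀ l : ℝ, 0 ≤ l →
      ψ l = α * l + β * l ^ 2 + ∫ r, (Real.exp (-(l * r)) - 1 + l * r) ∂ν)

include hψ in
lemma psi_zero : ψ 0 = 0 := by
  rw [hψ 0 le_rfl]; simp

include hα hβ hν0 hνint hψ in
lemma psi_mono : MonotoneOn ψ (Set.Ici 0) := by
  intro a ha b hb hab
  rw [Set.mem_Ici] at ha hb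
  rw [hψ a ha, hψ b hb]
  have hint : (∫ r, (Real.exp (-(a*r)) - 1 + a*r) ∂ν)
      ≤ ∫ r, (Real.exp (-(b*r)) - 1 + b*r) ∂ν := by
    refine integral_mono_ae (integrable_psi_term hν0 hνint ha)
      (integrable_psi_term hν0 hνint hb) ?_
    filter_upwards [nu_ae_pos hν0] with r hr
    exact aux_exp_mono (mul_nonneg ha hr.le) (by nlinarith)
  have h2 : α * a ≤ α * b := mul_le_mul_of_nonneg_left hab hα
  have h3 : β * a^2 ≤ β * b^2 := mul_le_mul_of_nonneg_left (pow_le_pow_left₀ ha hab 2) hβ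
  linarith

include hα hβ hν0 hνint hψ in
lemma psi_strictMono (hinv₂ : ∀ l : ℝ, 0 ≤ l → ψinv (ψ l) = l) :
    StrictMonoOn ψ (Set.Ici 0) := by
  intro a ha b hb hab
  refine lt_of_le_of_ne (psi_mono hα hβ hν0 hνint hψ ha hb hab.le) ?_
  intro heq
  have := congrArg ψinv heq
  rw [hinv₂ a (Set.mem_Ici.mp ha), hinv₂ b (Set.mem_Ici.mp hb)] at this
  exact hab.ne this

include hν0 hνint hψ in
lemma psi_hasDerivAt_D {l : ℝ} (hl : 0 < l) : HasDerivAt ψ (Dfun α β ν l) l := by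
  have hball : ∀ x ∈ Metric.ball l (l/2), 0 < x ∧ x ≤ 2*l := by
    intro x hx
    rw [Metric.mem_ball, Real.dist_eq] at hx
    rcases abs_lt.1 hx with ⟨h1, h2⟩
    constructor <;> linarith
  have main := _root_.hasDerivAt_integral_of_dominated_loc_of_deriv_le (μ := ν)
      (F := fun x a => Real.exp (-(x*a)) - 1 + x*a)
      (F' := fun x a => a * (1 - Real.exp (-(x*a))))
      (x₀ := l) (s := Metric.ball l (l/2)) (bound := fun r => max 1 (2*l) * min r (r^2)) (Metric.ball_mem_nhds l (half_pos hl))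
      (Eventually.of_forall fun x => (((Real.continuous_exp.comp
        (continuous_const.mul continuous_id).neg).sub continuous_const).add
        (continuous_const.mul continuous_id)).aestronglyMeasurable)
      (integrable_psi_term hν0 hνint hl.le)
      ((continuous_id.mul (continuous_const.sub (Real.continuous_exp.comp
        (continuous_const.mul continuous_id).neg))).aestronglyMeasurable)
      ?_ (hνint.const_mul _) ?_
  · have hD : HasDerivAt (fun x => ∫ a, (Real.exp (-(x*a)) - 1 + x*a) ∂ν)
        (∫ a, a * (1 - Real.exp (-(l*a))) ∂ν) l := main.2
    have hα' : HasDerivAt (fun x : ℝ => α * x) (α * 1) l := (hasDerivAt_id l).const_mul α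
    have hβ' : HasDerivAt (fun x : ℝ => β * x^2) (β * (2 * l^1)) l :=
      (hasDerivAt_pow 2 l).const_mul β
    have total := (hα'.add hβ').add hD
    have heq : ψ =ᶠ[nhds l] (fun x => α * x + β * x^2 + ∫ a, (Real.exp (-(x*a)) - 1 + x*a) ∂ν) := by
      filter_upwards [Ioi_mem_nhds hl] with x hx
      exact hψ x (le_of_lt hx)
    have := total.congr_of_eventuallyEq heq
    refine this.congr_deriv ?_
    unfold Dfun
    ring_nf
  · filter_upwards [nu_ae_pos hν0] with r hr
    intro x hx
    rcases hball x hx with ⟨hx0, hx2⟩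
    have hxr : 0 ≤ x * r := mul_nonneg hx0.le hr.le
    have h0 : 0 ≤ 1 - Real.exp (-(x*r)) := aux_one_sub_exp_nonneg hxr
    rw [Real.norm_eq_abs, abs_of_nonneg (mul_nonneg hr.le h0)]
    rcases le_total r 1 with h1 | h1
    · have hmin : min r (r^2) = r^2 := min_eq_right (by nlinarith)
      rw [hmin]
      have h2 : 1 - Real.exp (-(x*r)) ≤ x*r := aux_one_sub_exp_le
      nlinarith [le_max_right 1 (2*l)]
    · have hmin : min r (r^2) = r := min_eq_left (by nlinarith)
      rw [hmin]
      nlinarith [le_max_left 1 (2*l), aux_one_sub_exp_le_one (x := x*r)]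
  · filter_upwards [] with a
    intro x _
    have h1 : HasDerivAt (fun x : ℝ => x * a) a x := hasDerivAt_mul_const a
    have h2 : HasDerivAt (fun x : ℝ => Real.exp (-(x*a))) (Real.exp (-(x*a)) * (-a)) x :=
      (Real.hasDerivAt_exp _).comp x h1.neg
    have := (h2.sub_const 1).add h1
    refine this.congr_deriv ?_
    ring

include hβ hν0 hνint in
lemma D_mono {a b : ℝ} (ha : 0 ≤ a) (hab : a ≤ b) : Dfun α β ν a ≤ Dfun α β ν b := by
  have hb : 0 ≤ b := ha.trans hab
  have hint : (∫ r, r * (1 - Real.exp (-(a*r))) ∂ν) ≤ ∫ r, r * (1 - Real.exp (-(b*r))) ∂ν := by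
    refine integral_mono_ae (integrable_D_term hν0 hνint ha) (integrable_D_term hν0 hνint hb) ?_
    filter_upwards [nu_ae_pos hν0] with r hr
    have : Real.exp (-(b*r)) ≤ Real.exp (-(a*r)) := Real.exp_le_exp.2 (by nlinarith)
    nlinarith
  have h2 : 2*β*a ≤ 2*β*b := mul_le_mul_of_nonneg_left hab (by linarith)
  unfold Dfun
  linarith

include hν0 hνint in
lemma D_contAt {l : ℝ} (hl : 0 < l) : ContinuousAt (Dfun α β ν) l := by
  have hball : ∀ x ∈ Metric.ball l (l/2), 0 < x ∧ x ≤ 2*l := by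
    intro x hx
    rw [Metric.mem_ball, Real.dist_eq] at hx
    rcases abs_lt.1 hx with ⟨h1, h2⟩
    constructor <;> linarith
  have hcont_int : ContinuousAt (fun x => ∫ a, a * (1 - Real.exp (-(x*a))) ∂ν) l := by
    apply continuousAt_of_dominated (bound := fun r => max 1 (2*l) * min r (r^2))
    · exact Eventually.of_forall fun x => (continuous_id.mul (continuous_const.sub
        (Real.continuous_exp.comp (continuous_const.mul continuous_id).neg))).aestronglyMeasurable
    · filter_upwards [Metric.ball_mem_nhds l (half_pos hl)] with x hx
      filter_upwards [nu_ae_pos hν0] with r hr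
      rcases hball x hx with ⟨hx0, hx2⟩
      have hxr : 0 ≤ x * r := mul_nonneg hx0.le hr.le
      have h0 : 0 ≤ 1 - Real.exp (-(x*r)) := aux_one_sub_exp_nonneg hxr
      rw [Real.norm_eq_abs, abs_of_nonneg (mul_nonneg hr.le h0)]
      rcases le_total r 1 with h1 | h1
      · have hmin : min r (r^2) = r^2 := min_eq_right (by nlinarith)
        rw [hmin]
        have h2 : 1 - Real.exp (-(x*r)) ≤ x*r := aux_one_sub_exp_le
        nlinarith [le_max_right 1 (2*l)]
      · have hmin : min r (r^2) = r := min_eq_left (by nlinarith)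
        rw [hmin]
        nlinarith [le_max_left 1 (2*l), aux_one_sub_exp_le_one (x := x*r)]
    · exact hνint.const_mul _
    · filter_upwards [] with a
      exact (continuous_const.mul (continuous_const.sub (Real.continuous_exp.comp
        ((continuous_id.mul continuous_const)).neg))).continuousAt
  exact ((continuousAt_const.add ((continuous_const.mul continuous_id).continuousAt)).add hcont_int)

include hα hβ hν0 hνint hψ in
lemma D_pos (hinv₂ : ∀ l : ℝ, 0 ≤ l → ψinv (ψ l) = l) {l : ℝ} (hl : 0 < l) :
    0 < Dfun α β ν l := by
  by_contra hneg
  push_neg at hneg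
  set a := l/3 with ha_def
  set b := 2*l/3 with hb_def
  have ha0 : 0 < a := by positivity
  have hab : a < b := by rw [ha_def, hb_def]; linarith
  have hbl : b < l := by rw [hb_def]; linarith
  have hcont : ContinuousOn ψ (Set.Icc a b) := fun x hx =>
    (psi_hasDerivAt_D hν0 hνint hψ (lt_of_lt_of_le ha0 hx.1)).continuousAt.continuousWithinAt
  obtain ⟨ξ, hξ, heq⟩ := exists_hasDerivAt_eq_slope ψ (Dfun α β ν) hab hcont
    (fun x hx => psi_hasDerivAt_D hν0 hνint hψ (lt_trans ha0 hx.1))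
  have hψab : ψ a < ψ b := psi_strictMono hα hβ hν0 hνint hψ hinv₂
    (Set.mem_Ici.mpr ha0.le) (Set.mem_Ici.mpr (ha0.trans hab).le) hab
  have hslope : 0 < (ψ b - ψ a) / (b - a) := div_pos (by linarith) (by linarith)
  have hle : Dfun α β ν ξ ≤ Dfun α β ν l := D_mono hβ hν0 hνint (lt_trans ha0 hξ.1).le
    (le_of_lt (lt_trans hξ.2 hbl))
  rw [heq] at hle
  linarith

include hα hβ hν0 hνint hψ in
lemma psi_contWithinAt_zero : ContinuousWithinAt ψ (Set.Ici 0) 0 := by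
  have hI : ∀ u ∈ Set.Icc (0:ℝ) 1, ψ u ≤ (α + β + ∫ r, min r (r^2) ∂ν) * u := by
    intro u hu
    rcases hu with ⟨hu0, hu1⟩
    rw [hψ u hu0]
    have hint : (∫ r, (Real.exp (-(u*r)) - 1 + u*r) ∂ν) ≤ ∫ r, u * min r (r^2) ∂ν := by
      refine integral_mono_ae (integrable_psi_term hν0 hνint hu0) (hνint.const_mul u) ?_
      filter_upwards [nu_ae_pos hν0] with r hr
      have hur : 0 ≤ u * r := mul_nonneg hu0 hr.le
      rcases le_total r 1 with h1 | h1
      · have hmin : min r (r^2) = r^2 := min_eq_right (by nlinarith)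
        rw [hmin]
        have := aux_exp_le_sq hur
        nlinarith
      · have hmin : min r (r^2) = r := min_eq_left (by nlinarith)
        rw [hmin]
        have := aux_exp_le_lin hur
        nlinarith
    rw [MeasureTheory.integral_const_mul] at hint
    nlinarith [mul_nonneg hβ (mul_nonneg hu0 (by linarith : (0:ℝ) ≤ 1 - u))]
  have hlow : ∀ u ∈ Set.Icc (0:ℝ) 1, 0 ≤ ψ u := by
    intro u hu
    have := psi_mono hα hβ hν0 hνint hψ (Set.self_mem_Ici) (Set.mem_Ici.mpr hu.1) hu.1
    rw [psi_zero hψ] at this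
    exact this
  have hmem : Set.Icc (0:ℝ) 1 ∈ nhdsWithin (0:ℝ) (Set.Ici 0) :=
    Icc_mem_nhdsGE_of_mem (by norm_num)
  rw [ContinuousWithinAt, psi_zero hψ]
  have hupper : Tendsto (fun u : ℝ => (α + β + ∫ r, min r (r^2) ∂ν) * u)
      (nhdsWithin (0:ℝ) (Set.Ici 0)) (nhds 0) := by
    have h : Tendsto (fun u : ℝ => (α + β + ∫ r, min r (r^2) ∂ν) * u) (nhds (0:ℝ))
        (nhds ((α + β + ∫ r, min r (r^2) ∂ν) * 0)) :=
      (continuous_const.mul continuous_id).tendsto 0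
    rw [mul_zero] at h
    exact h.mono_left nhdsWithin_le_nhds
  refine tendsto_of_tendsto_of_tendsto_of_le_of_le' tendsto_const_nhds hupper ?_ ?_
  · filter_upwards [hmem] with u hu; exact hlow u hu
  · filter_upwards [hmem] with u hu; exact hI u hu

include hα hβ hν0 hνint hψ in
lemma psi_continuousOn : ContinuousOn ψ (Set.Ici 0) := by
  intro x hx
  rcases eq_or_lt_of_le (Set.mem_Ici.mp hx) with h0 | h0
  · rw [← h0]; exact psi_contWithinAt_zero hα hβ hν0 hνint hψ
  · exact (psi_hasDerivAt_D hν0 hνint hψ h0).continuousAt.continuousWithinAt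

end psi

lemma deriv_pos_eventually_gt {f : ℝ → ℝ} {d x : ℝ} (hf : HasDerivAt f d x) (hd : 0 < d) :
    ∀ᶠ y in nhdsWithin x (Set.Ioi x), f x < f y := by
  have hslope : Tendsto (slope f x) (nhdsWithin x {x}ᶜ) (nhds d) :=
    hasDerivAt_iff_tendsto_slope.1 hf
  have h2 : Tendsto (slope f x) (nhdsWithin x (Set.Ioi x)) (nhds d) :=
    hslope.mono_left (nhdsWithin_mono x (fun y hy => ne_of_gt hy))
  have h3 : ∀ᶠ y in nhdsWithin x (Set.Ioi x), 0 < slope f x y :=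
    h2.eventually (eventually_gt_nhds hd)
  filter_upwards [h3, self_mem_nhdsWithin] with y hy hy'
  rw [slope_def_field] at hy
  have hyx : 0 < y - x := sub_pos.2 hy'
  rcases div_pos_iff.1 hy with ⟨h1, _⟩ | ⟨_, h2'⟩
  · linarith
  · linarith

lemma psiinv_contAt {ψ ψinv : ℝ → ℝ} (hsm : StrictMonoOn ψ (Set.Ici 0)) (hψ0 : ψ 0 = 0)
    (hinvpos : ∀ l : ℝ, 0 < l → 0 < ψinv l) (hinv₁ : ∀ l : ℝ, 0 ≤ l → ψ (ψinv l) = l)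
    {y : ℝ} (hy : 0 < y) : ContinuousAt ψinv y := by
  have hx0 : 0 < ψinv y := hinvpos y hy
  rw [ContinuousAt]
  refine tendsto_order.2 ⟨?_, ?_⟩
  · intro b hb
    set b' := max b 0 with hb'def
    have hb'0 : 0 ≤ b' := le_max_right b 0
    have hb'lt : b' < ψinv y := max_lt hb hx0
    have hψb' : ψ b' < y := by
      have := hsm (Set.mem_Ici.mpr hb'0) (Set.mem_Ici.mpr hx0.le) hb'lt
      rwa [hinv₁ y hy.le] at this
    have hψb'0 : 0 ≤ ψ b' := by
      have := hsm.monotoneOn (Set.self_mem_Ici) (Set.mem_Ici.mpr hb'0) hb'0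
      rwa [hψ0] at this
    filter_upwards [Ioi_mem_nhds hψb'] with z hz
    rw [Set.mem_Ioi] at hz
    have hz0 : 0 < z := lt_of_le_of_lt hψb'0 hz
    by_contra hle
    push_neg at hle
    have h5 : ψ (ψinv z) ≤ ψ b' := hsm.monotoneOn (Set.mem_Ici.mpr (hinvpos z hz0).le)
      (Set.mem_Ici.mpr hb'0) (hle.trans (le_max_left b 0))
    rw [hinv₁ z hz0.le] at h5
    linarith
  · intro b hb
    have hb0 : 0 < b := lt_trans hx0 hb
    have hψb : y < ψ b := by
      have := hsm (Set.mem_Ici.mpr hx0.le) (Set.mem_Ici.mpr hb0.le) hb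
      rwa [hinv₁ y hy.le] at this
    filter_upwards [Ioo_mem_nhds hy hψb] with z hz
    rcases hz with ⟨hz0, hz2⟩
    by_contra hle
    push_neg at hle
    have h5 : ψ b ≤ ψ (ψinv z) := hsm.monotoneOn (Set.mem_Ici.mpr hb0.le)
      (Set.mem_Ici.mpr (hinvpos z hz0).le) hle
    rw [hinv₁ z hz0.le] at h5
    linarith

/-- With κ_r(λ,0) solving ∂κ/∂r = λ - ψ(κ), κ₀ = 0, and
L_r(λ) = 1 - ψ(κ_r(λ,0))/λ, one has ∫₀^{-log L_r(λ)} dx/φ(λ(1-e^{-x})) = r,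
where φ = ψ' ∘ ψ⁻¹. -/
theorem L_integral_identity (α β : ℝ) (hα : 0 ≤ α) (hβ : 0 ≤ β)
    (ν : Measure ℝ) (hν0 : ν (Set.Iic 0) = 0)
    (hνint : Integrable (fun r => min r (r ^ 2)) ν)
    (ψ ψ' ψinv : ℝ → ℝ) (κ : ℝ → ℝ → ℝ)
    (hψ : ∀ l : ℝ, 0 ≤ l →
      ψ l = α * l + β * l ^ 2 + ∫ r, (Real.exp (-(l * r)) - 1 + l * r) ∂ν)
    (hext : IntegrableOn (fun u => 1 / ψ u) (Set.Ioi 1))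
    (hderiv : ∀ l : ℝ, 0 < l → HasDerivAt ψ (ψ' l) l)
    (hinvpos : ∀ l : ℝ, 0 < l → 0 < ψinv l)
    (hinv₁ : ∀ l : ℝ, 0 ≤ l → ψ (ψinv l) = l)
    (hinv₂ : ∀ l : ℝ, 0 ≤ l → ψinv (ψ l) = l)
    -- κ_·(λ,0) solves the ODE ∂κ_r/∂r = λ - ψ(κ_r), κ₀ = 0
    (hκ0 : ∀ l : ℝ, 0 < l → κ 0 l = 0)
    (hκ : ∀ l : ℝ, 0 < l → ∀ r : ℝ, 0 ≤ r →
      HasDerivAt (fun s => κ s l) (l - ψ (κ r l)) r) :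
    ∀ r l : ℝ, 0 < r → 0 < l →
      (∫ x in (0:ℝ)..(-Real.log (1 - ψ (κ r l) / l)),
        1 / ψ' (ψinv (l * (1 - Real.exp (-x))))) = r := by
  intro r l hr hl
  -- basic ψ facts
  have hψ0 : ψ 0 = 0 := psi_zero hψ
  have hmono : MonotoneOn ψ (Set.Ici 0) := psi_mono hα hβ hν0 hνint hψ
  have hsm : StrictMonoOn ψ (Set.Ici 0) := psi_strictMono hα hβ hν0 hνint hψ hinv₂
  have hDpos : ∀ x : ℝ, 0 < x → 0 < Dfun α β ν x :=
    fun x hx => D_pos hα hβ hν0 hνint hψ hinv₂ hx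
  have hψD : ∀ x : ℝ, 0 < x → HasDerivAt ψ (Dfun α β ν x) x :=
    fun x hx => psi_hasDerivAt_D hν0 hνint hψ hx
  have hψ'D : ∀ x : ℝ, 0 < x → ψ' x = Dfun α β ν x :=
    fun x hx => (hderiv x hx).unique (hψD x hx)
  have hψ'pos : ∀ x : ℝ, 0 < x → 0 < ψ' x := fun x hx => by
    rw [hψ'D x hx]; exact hDpos x hx
  have hψcont : ContinuousOn ψ (Set.Ici 0) := psi_continuousOn hα hβ hν0 hνint hψ
  set c := ψinv l with hc_def
  have hc : 0 < c := hinvpos l hl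
  have hψc : ψ c = l := hinv₁ l hl.le
  set u : ℝ → ℝ := fun s => κ s l with hu_def
  have hu0 : u 0 = 0 := hκ0 l hl
  have hu' : ∀ s : ℝ, 0 ≤ s → HasDerivAt u (l - ψ (u s)) s := fun s hs => hκ l hl s hs
  have hucont : ∀ s : ℝ, 0 ≤ s → ContinuousAt u s := fun s hs => (hu' s hs).continuousAt
  have huconton : ∀ t : ℝ, ContinuousOn u (Set.Icc 0 t) :=
    fun t s hs => (hucont s hs.1).continuousWithinAt
  -- κ stays nonnegative
  have hunn : ∀ s : ℝ, 0 ≤ s → 0 ≤ u s := by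
    intro s₁ hs₁
    by_contra hneg
    push_neg at hneg
    set A := Set.Icc (0:ℝ) s₁ ∩ u ⁻¹' (Set.Ici 0) with hA_def
    have hA_closed : IsClosed A :=
      (huconton s₁).preimage_isClosed_of_isClosed isClosed_Icc isClosed_Ici
    have h0A : (0:ℝ) ∈ A := ⟨⟨le_rfl, hs₁⟩, by simp [Set.mem_preimage, hu0]⟩
    have hA_bdd : BddAbove A := (bddAbove_Icc (a := (0:ℝ)) (b := s₁)).mono Set.inter_subset_left
    set σ := sSup A with hσ_def
    have hσA : σ ∈ A := hA_closed.csSup_mem ⟨0, h0A⟩ hA_bdd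
    have hσ0 : 0 ≤ σ := hσA.1.1
    have hσs₁ : σ ≤ s₁ := hσA.1.2
    have huσ : 0 ≤ u σ := hσA.2
    have hσlt : σ < s₁ := lt_of_le_of_ne hσs₁ (fun hEq => by rw [hEq] at huσ; linarith)
    have hgood : ∀ᶠ y in nhdsWithin σ (Set.Ioi σ), 0 < u y := by
      rcases eq_or_lt_of_le huσ with heq | hpos
      · have hd : HasDerivAt u l σ := by
          have h6 := hu' σ hσ0
          rw [← heq, hψ0, sub_zero] at h6
          exact h6
        filter_upwards [deriv_pos_eventually_gt hd hl] with y hy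
        rw [← heq] at hy; exact hy
      · have h7 := (hucont σ hσ0).eventually_mem (Ioi_mem_nhds hpos)
        exact (h7.filter_mono nhdsWithin_le_nhds).mono (fun y hy => hy)
    have hmem : Set.Ioo σ s₁ ∈ nhdsWithin σ (Set.Ioi σ) :=
      Ioo_mem_nhdsGT_of_mem ⟨le_rfl, hσlt⟩
    obtain ⟨y, hy1, hy2⟩ := (hgood.and (eventually_of_mem hmem (fun y hy => hy))).exists
    have hyA : y ∈ A := ⟨⟨hσ0.trans hy2.1.le, hy2.2.le⟩, Set.mem_preimage.mpr hy1.le⟩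
    have := le_csSup hA_bdd hyA
    linarith [hy2.1]
  -- κ stays below c = ψinv l
  have hultc : ∀ s : ℝ, 0 ≤ s → u s < c := by
    intro s₁ hs₁
    by_contra hge
    push_neg at hge
    set B := Set.Icc (0:ℝ) s₁ ∩ u ⁻¹' (Set.Ici c) with hB_def
    have hB_closed : IsClosed B :=
      (huconton s₁).preimage_isClosed_of_isClosed isClosed_Icc isClosed_Ici
    have hs₁B : s₁ ∈ B := ⟨⟨hs₁, le_rfl⟩, hge⟩
    have hB_bdd : BddBelow B := ⟨0, fun x hx => hx.1.1⟩
    set s₀ := sInf B with hs₀_def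
    have hs₀B : s₀ ∈ B := hB_closed.csInf_mem ⟨s₁, hs₁B⟩ hB_bdd
    have hs₀0 : 0 ≤ s₀ := hs₀B.1.1
    have hcs₀ : c ≤ u s₀ := hs₀B.2
    have hs₀pos : 0 < s₀ := by
      rcases eq_or_lt_of_le hs₀0 with heq | h
      · exfalso; rw [← heq, hu0] at hcs₀; linarith
      · exact h
    have hbelow : ∀ t : ℝ, 0 ≤ t → t < s₀ → u t < c := by
      intro t ht hts
      by_contra hge'
      push_neg at hge'
      have htB : t ∈ B := ⟨⟨ht, hts.le.trans hs₀B.1.2⟩, hge'⟩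
      have := csInf_le hB_bdd htB
      linarith
    have hus₀ : u s₀ = c := by
      refine le_antisymm ?_ hcs₀
      have htend : Tendsto u (nhdsWithin s₀ (Set.Iio s₀)) (nhds (u s₀)) :=
        ((hucont s₀ hs₀0).tendsto).mono_left nhdsWithin_le_nhds
      refine le_of_tendsto htend ?_
      filter_upwards [Ioo_mem_nhdsLT_of_mem (⟨hs₀pos, le_rfl⟩ : s₀ ∈ Set.Ioc 0 s₀)] with t ht
      exact (hbelow t ht.1.le ht.2).le
    set K := Dfun α β ν c with hK_def
    set w : ℝ → ℝ := fun s => (c - u s) * Real.exp (K * s) with hw_def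
    have hwmono : MonotoneOn w (Set.Icc 0 s₀) := by
      refine monotoneOn_of_hasDerivWithinAt_nonneg (convex_Icc 0 s₀)
        (f' := fun s => (-(l - ψ (u s))) * Real.exp (K * s)
          + (c - u s) * (Real.exp (K * s) * K)) ?_ ?_ ?_
      · exact ((continuousOn_const.sub (huconton s₀)).mul
          ((Real.continuous_exp.comp (continuous_const.mul continuous_id)).continuousOn))
      · intro s hs
        rw [interior_Icc] at hs
        have h1 : HasDerivAt (fun s => c - u s) (-(l - ψ (u s))) s := (hu' s hs.1.le).const_sub c
        have h2 : HasDerivAt (fun s => Real.exp (K * s)) (Real.exp (K * s) * K) s := by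
          have hid : HasDerivAt (fun s : ℝ => K * s) K s := by
            simpa using (hasDerivAt_id s).const_mul K
          exact (Real.hasDerivAt_exp (K * s)).comp s hid
        exact (h1.mul h2).hasDerivWithinAt
      · intro s hs
        rw [interior_Icc] at hs
        have hsnn : 0 ≤ s := hs.1.le
        have hult : u s < c := hbelow s hsnn hs.2
        have hunn' : 0 ≤ u s := hunn s hsnn
        have hcu : 0 < c - u s := sub_pos.2 hult
        obtain ⟨ξ, hξ, hslope⟩ := exists_hasDerivAt_eq_slope ψ (Dfun α β ν) hult
          (hψcont.mono (fun x hx => le_trans hunn' hx.1))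
          (fun x hx => hψD x (lt_of_le_of_lt hunn' hx.1))
        have hKξ : Dfun α β ν ξ ≤ K :=
          D_mono hβ hν0 hνint (le_of_lt (lt_of_le_of_lt hunn' hξ.1)) hξ.2.le
        have hineq : l - ψ (u s) ≤ K * (c - u s) := by
          have h5 : (ψ c - ψ (u s)) / (c - u s) ≤ K := by rw [← hslope]; exact hKξ
          rw [div_le_iff₀ hcu] at h5
          rw [← hψc]
          linarith
        have hE : 0 < Real.exp (K * s) := Real.exp_pos _
        show 0 ≤ -(l - ψ (u s)) * Real.exp (K * s) + (c - u s) * (Real.exp (K * s) * K)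
        nlinarith [mul_nonneg hE.le (sub_nonneg.2 hineq)]
    have h1 := hwmono (Set.left_mem_Icc.mpr hs₀pos.le) (Set.right_mem_Icc.mpr hs₀pos.le) hs₀pos.le
    have e0 : w 0 = c := by simp [hw_def, hu0]
    have e1 : w s₀ = 0 := by simp [hw_def, hus₀]
    rw [e0, e1] at h1
    linarith
  -- κ is strictly increasing on [0, r]
  have husm : StrictMonoOn u (Set.Icc 0 r) := by
    refine strictMonoOn_of_hasDerivWithinAt_pos (convex_Icc 0 r) (huconton r)
      (f' := fun s => l - ψ (u s)) ?_ ?_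
    · intro s hs
      rw [interior_Icc] at hs
      exact (hu' s hs.1.le).hasDerivWithinAt
    · intro s hs
      rw [interior_Icc] at hs
      have h1 : u s < c := hultc s hs.1.le
      have h2 : 0 ≤ u s := hunn s hs.1.le
      have h3 : ψ (u s) < ψ c := hsm (Set.mem_Ici.mpr h2) (Set.mem_Ici.mpr hc.le) h1
      rw [hψc] at h3
      show 0 < l - ψ (u s)
      linarith
  have humono : MonotoneOn u (Set.Icc 0 r) := husm.monotoneOn
  set κr := u r with hκr_def
  have hκr_pos : 0 < κr := by
    have := husm (Set.left_mem_Icc.mpr hr.le) (Set.right_mem_Icc.mpr hr.le) hr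
    rwa [hu0] at this
  have hκr_lt : κr < c := hultc r hr.le
  have hP_pos : 0 < ψ κr := by
    have := hsm (Set.self_mem_Ici) (Set.mem_Ici.mpr hκr_pos.le) hκr_pos
    rwa [hψ0] at this
  have hP_lt : ψ κr < l := by
    have := hsm (Set.mem_Ici.mpr hκr_pos.le) (Set.mem_Ici.mpr hc.le) hκr_lt
    rwa [hψc] at this
  -- basic facts about h = 1/(l - ψ)
  have hψv_le : ∀ v : ℝ, 0 ≤ v → v ≤ κr → ψ v ≤ ψ κr := fun v hv0 hvκ =>
    hmono (Set.mem_Ici.mpr hv0) (Set.mem_Ici.mpr hκr_pos.le) hvκ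
  set h : ℝ → ℝ := fun v => (l - ψ v)⁻¹ with hh_def
  have hlψ : ∀ v : ℝ, 0 ≤ v → v ≤ κr → 0 < l - ψ v := fun v hv0 hvκ => by
    have := hψv_le v hv0 hvκ; linarith
  have hhconton : ContinuousOn h (Set.Icc 0 κr) := by
    refine (continuousOn_const.sub (hψcont.mono ?_)).inv₀ ?_
    · exact fun v hv => hv.1
    · exact fun v hv => (hlψ v hv.1 hv.2).ne'
  have hh_intIcc : IntegrableOn h (Set.Icc 0 κr) := hhconton.integrableOn_Icc
  have hh_ii : ∀ a b : ℝ, 0 ≤ a → b ≤ κr → a ≤ b → IntervalIntegrable h volume a b := by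
    intro a b ha hb hab
    apply (hh_intIcc.mono_set ?_).intervalIntegrable
    rw [Set.uIcc_of_le hab]
    exact Set.Icc_subset_Icc ha hb
  have hh_nn : ∀ v : ℝ, 0 ≤ v → v ≤ κr → 0 ≤ h v := fun v hv0 hvκ =>
    inv_nonneg.2 (hlψ v hv0 hvκ).le
  have hhcontOpen : ContinuousOn h (Set.Ioo 0 c) := by
    intro v hv
    have h1 : ContinuousAt ψ v := (hψD v hv.1).continuousAt
    have h2' : ψ v < l := by
      have := hsm (Set.mem_Ici.mpr hv.1.le) (Set.mem_Ici.mpr hc.le) hv.2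
      rwa [hψc] at this
    exact ((continuousAt_const.sub h1).inv₀ (by linarith : l - ψ v ≠ 0)).continuousWithinAt
  -- the primitive Φ of h
  set Φ : ℝ → ℝ := fun b => ∫ v in (0:ℝ)..b, h v with hΦ_def
  have hΦcont : ContinuousOn Φ (Set.Icc 0 κr) := by
    have h1 : IntegrableOn h (Set.uIcc 0 κr) := by rwa [Set.uIcc_of_le hκr_pos.le]
    have h2 := intervalIntegral.continuousOn_primitive_interval h1
    rwa [Set.uIcc_of_le hκr_pos.le] at h2
  have humem : ∀ s : ℝ, 0 ≤ s → s ≤ r → 0 ≤ u s ∧ u s ≤ κr := fun s h0 h1 =>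
    ⟨hunn s h0, humono ⟨h0, h1⟩ (Set.right_mem_Icc.mpr hr.le) h1⟩
  have hstep1 : ∀ σ : ℝ, σ ∈ Set.Ioo (0:ℝ) r → Φ (u r) - Φ (u σ) = r - σ := by
    intro σ hσ
    have hkey : ∀ s ∈ Set.uIcc σ r, HasDerivAt (fun s => Φ (u s)) 1 s := by
      intro s hs
      rw [Set.uIcc_of_le hσ.2.le] at hs
      have hs0 : 0 < s := lt_of_lt_of_le hσ.1 hs.1
      have hus_pos : 0 < u s := by
        have := husm (Set.left_mem_Icc.mpr hr.le) ⟨hs0.le, hs.2⟩ hs0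
        rwa [hu0] at this
      have hus_le : u s ≤ κr := (humem s hs0.le hs.2).2
      have hus_ltc : u s < c := hultc s hs0.le
      have hprim : HasDerivAt Φ (h (u s)) (u s) :=
        intervalIntegral.integral_hasDerivAt_right
          (hh_ii 0 (u s) le_rfl hus_le hus_pos.le)
          ((hhcontOpen.stronglyMeasurableAtFilter isOpen_Ioo) (u s) ⟨hus_pos, hus_ltc⟩)
          (hhcontOpen.continuousAt (isOpen_Ioo.mem_nhds ⟨hus_pos, hus_ltc⟩))
      have hval : h (u s) * (l - ψ (u s)) = 1 := by
        simp only [hh_def]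
        exact inv_mul_cancel₀ (hlψ (u s) hus_pos.le hus_le).ne'
      have hcomp := hprim.comp s (hu' s hs0.le)
      rw [hval] at hcomp
      exact hcomp
    have h2 := intervalIntegral.integral_eq_sub_of_hasDerivAt hkey intervalIntegrable_const
    rw [intervalIntegral.integral_const] at h2
    simpa using h2.symm
  have hΦur : Φ κr = r := by
    have htendu : Tendsto u (nhdsWithin (0:ℝ) (Set.Ioi 0)) (nhds 0) := by
      have h5 := (hucont 0 le_rfl).tendsto
      rw [hu0] at h5
      exact h5.mono_left nhdsWithin_le_nhds
    have hev : ∀ᶠ σ in nhdsWithin (0:ℝ) (Set.Ioi 0), σ ∈ Set.Ioo 0 r :=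
      eventually_of_mem (Ioo_mem_nhdsGT_of_mem ⟨le_rfl, hr⟩) (fun σ hσ => hσ)
    have htend2 : Tendsto (fun σ => Φ (u σ)) (nhdsWithin (0:ℝ) (Set.Ioi 0)) (nhds (Φ 0)) := by
      refine (hΦcont 0 ⟨le_rfl, hκr_pos.le⟩).tendsto.comp ?_
      refine tendsto_nhdsWithin_of_tendsto_nhds_of_eventually_within _ htendu ?_
      filter_upwards [hev] with σ hσ
      exact ⟨hunn σ hσ.1.le, (humem σ hσ.1.le hσ.2.le).2⟩
    have hΦ0 : Φ 0 = 0 := intervalIntegral.integral_same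
    have hA : Tendsto (fun σ => Φ κr - Φ (u σ)) (nhdsWithin (0:ℝ) (Set.Ioi 0))
        (nhds (Φ κr)) := by
      have h2 := (tendsto_const_nhds (x := Φ κr)
        (f := nhdsWithin (0:ℝ) (Set.Ioi 0))).sub htend2
      rw [hΦ0, sub_zero] at h2
      exact h2
    have hB : Tendsto (fun σ => Φ κr - Φ (u σ)) (nhdsWithin (0:ℝ) (Set.Ioi 0)) (nhds r) := by
      have h3 : Tendsto (fun σ : ℝ => r - σ) (nhdsWithin (0:ℝ) (Set.Ioi 0)) (nhds r) := by
        have h4 : Tendsto (fun σ : ℝ => r - σ) (nhds (0:ℝ)) (nhds (r - 0)) :=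
          tendsto_const_nhds.sub tendsto_id
        rw [sub_zero] at h4
        exact h4.mono_left nhdsWithin_le_nhds
      refine h3.congr' ?_
      filter_upwards [hev] with σ hσ
      exact (hstep1 σ hσ).symm
    exact tendsto_nhds_unique hA hB
  -- the integrand f
  set f : ℝ → ℝ := fun x => 1 / ψ' (ψinv (l * (1 - Real.exp (-x)))) with hf_def
  have hyx : ∀ x : ℝ, 0 < x → 0 < l * (1 - Real.exp (-x)) := by
    intro x hx
    have h1 : Real.exp (-x) < 1 := by
      rw [← Real.exp_zero]
      exact Real.exp_lt_exp.2 (by linarith)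
    exact mul_pos hl (by linarith)
  have hf_contAt : ∀ x : ℝ, 0 < x → ContinuousAt f x := by
    intro x hx
    have hy0 := hyx x hx
    have hy_cont : ContinuousAt (fun x : ℝ => l * (1 - Real.exp (-x))) x :=
      (continuous_const.mul (continuous_const.sub (Real.continuous_exp.comp
        continuous_neg))).continuousAt
    have h1 : ContinuousAt ψinv (l * (1 - Real.exp (-x))) :=
      psiinv_contAt hsm hψ0 hinvpos hinv₁ hy0
    have hz : 0 < ψinv (l * (1 - Real.exp (-x))) := hinvpos _ hy0
    have h2 : ContinuousAt ψ' (ψinv (l * (1 - Real.exp (-x)))) := by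
      refine (D_contAt (α := α) (β := β) hν0 hνint hz).congr ?_
      filter_upwards [Ioi_mem_nhds hz] with t ht
      exact (hψ'D t ht).symm
    have h3 : ψ' (ψinv (l * (1 - Real.exp (-x)))) ≠ 0 := (hψ'pos _ hz).ne'
    have ha : ContinuousAt (fun x : ℝ => ψinv (l * (1 - Real.exp (-x)))) x :=
      ContinuousAt.comp h1 hy_cont
    have hb : ContinuousAt (fun x : ℝ => ψ' (ψinv (l * (1 - Real.exp (-x))))) x :=
      ContinuousAt.comp h2 ha
    exact continuousAt_const.div hb h3
  have hf_pos : ∀ x : ℝ, 0 < x → 0 < f x := by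
    intro x hx
    have hy0 := hyx x hx
    have hz : 0 < ψinv (l * (1 - Real.exp (-x))) := hinvpos _ hy0
    simp only [hf_def]
    exact one_div_pos.2 (hψ'pos _ hz)
  -- the change of variables G
  set T := -Real.log (1 - ψ κr / l) with hT_def
  set G : ℝ → ℝ := fun v => -Real.log (1 - ψ v / l) with hG_def
  have hψv_nn : ∀ v : ℝ, 0 ≤ v → 0 ≤ ψ v := fun v hv0 => by
    have := hmono (Set.self_mem_Ici) (Set.mem_Ici.mpr hv0) hv0
    rwa [hψ0] at this
  have hfrac : ∀ v : ℝ, 0 ≤ v → v ≤ κr → 0 < 1 - ψ v / l := by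
    intro v h0 h1
    have h2 : ψ v / l < 1 := (div_lt_one hl).2 (by linarith [hlψ v h0 h1])
    linarith
  have hGpos : ∀ v : ℝ, 0 < v → v ≤ κr → 0 < G v := by
    intro v h0 h1
    have h2 : 0 < ψ v := by
      have := hsm (Set.self_mem_Ici) (Set.mem_Ici.mpr h0.le) h0
      rwa [hψ0] at this
    have h3 : 1 - ψ v / l < 1 := by
      have : 0 < ψ v / l := div_pos h2 hl
      linarith
    have h4 := Real.log_neg (hfrac v h0.le h1) h3
    simp only [hG_def]
    linarith
  have hGle : ∀ v : ℝ, 0 ≤ v → v ≤ κr → G v ≤ T := by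
    intro v h0 h1
    have h2 : 1 - ψ κr / l ≤ 1 - ψ v / l := by
      have h3 : ψ v / l ≤ ψ κr / l := (div_le_div_iff_of_pos_right hl).2 (hψv_le v h0 h1)
      linarith
    have h4 := Real.log_le_log (hfrac κr hκr_pos.le le_rfl) h2
    simp only [hG_def, hT_def]
    linarith
  have hTG : G κr = T := rfl
  have hT_pos : 0 < T := by rw [← hTG]; exact hGpos κr hκr_pos le_rfl
  have hGd : ∀ v : ℝ, 0 < v → v ≤ κr → HasDerivAt G (ψ' v / (l - ψ v)) v := by
    intro v h0 h1
    have hψv_l : 0 < l - ψ v := hlψ v h0.le h1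
    have hp : 0 < 1 - ψ v / l := hfrac v h0.le h1
    have hd1 : HasDerivAt (fun v => 1 - ψ v / l) (-(ψ' v / l)) v :=
      ((hderiv v h0).div_const l).const_sub 1
    have hd2 := (hd1.log hp.ne').neg
    have hval : -(-(ψ' v / l) / (1 - ψ v / l)) = ψ' v / (l - ψ v) := by
      rw [neg_div, neg_neg, div_eq_div_iff hp.ne' hψv_l.ne']
      field_simp
    rw [hval] at hd2
    exact hd2
  -- the substitution identity
  have hsubst : ∀ ε : ℝ, ε ∈ Set.Ioo (0:ℝ) κr →
      ∫ x in (G ε)..(G κr), f x = ∫ v in ε..κr, h v := by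
    intro ε hε
    have hεκ : ε ≤ κr := hε.2.le
    have huIcc : Set.uIcc ε κr = Set.Icc ε κr := Set.uIcc_of_le hεκ
    have hmemv : ∀ v : ℝ, v ∈ Set.Icc ε κr → 0 < v ∧ v ≤ κr := fun v hv =>
      ⟨lt_of_lt_of_le hε.1 hv.1, hv.2⟩
    have hGd' : ∀ v ∈ Set.uIcc ε κr, HasDerivAt G (ψ' v / (l - ψ v)) v := by
      intro v hv
      rw [huIcc] at hv
      exact hGd v (hmemv v hv).1 (hmemv v hv).2
    have hG'cont : ContinuousOn (fun v => ψ' v / (l - ψ v)) (Set.uIcc ε κr) := by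
      rw [huIcc]
      have hDcont : ContinuousOn (fun v => Dfun α β ν v / (l - ψ v)) (Set.Icc ε κr) := by
        intro v hv
        obtain ⟨hv0, hvκ⟩ := hmemv v hv
        refine ContinuousWithinAt.div ?_ ?_ (hlψ v hv0.le hvκ).ne'
        · exact (D_contAt hν0 hνint hv0).continuousWithinAt
        · exact (continuousAt_const.sub (hψD v hv0).continuousAt).continuousWithinAt
      refine hDcont.congr ?_
      intro v hv
      show ψ' v / (l - ψ v) = Dfun α β ν v / (l - ψ v)
      rw [hψ'D v (hmemv v hv).1]
    have himg : ContinuousOn f (G '' Set.uIcc ε κr) := by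
      intro x hx
      obtain ⟨v, hv, rfl⟩ := hx
      rw [huIcc] at hv
      exact (hf_contAt _ (hGpos v (hmemv v hv).1 (hmemv v hv).2)).continuousWithinAt
    have hcv := intervalIntegral.integral_comp_mul_deriv' hGd' hG'cont himg
    rw [← hcv]
    apply intervalIntegral.integral_congr
    intro v hv
    rw [huIcc] at hv
    obtain ⟨hv0, hvκ⟩ := hmemv v hv
    have hp : 0 < 1 - ψ v / l := hfrac v hv0.le hvκ
    have hexp : Real.exp (-(G v)) = 1 - ψ v / l := by
      simp only [hG_def, neg_neg]
      exact Real.exp_log hp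
    have harg : l * (1 - Real.exp (-(G v))) = ψ v := by
      rw [hexp]
      field_simp
      ring
    have hne1 : ψ' v ≠ 0 := (hψ'pos v hv0).ne'
    have hne2 : l - ψ v ≠ 0 := (hlψ v hv0.le hvκ).ne'
    show (f ∘ G) v * (ψ' v / (l - ψ v)) = h v
    simp only [Function.comp_apply, hf_def, hh_def]
    rw [harg, hinv₂ v hv0.le]
    field_simp
  -- the sequence of lower endpoints and integrability of f near 0
  set εseq : ℕ → ℝ := fun n => κr / (n + 2) with hεseq_def
  have hεmem : ∀ n : ℕ, εseq n ∈ Set.Ioo (0:ℝ) κr := by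
    intro n
    constructor
    · simp only [hεseq_def]
      positivity
    · simp only [hεseq_def]
      rw [div_lt_iff₀ (by positivity)]
      nlinarith [hκr_pos, (Nat.cast_nonneg n : (0:ℝ) ≤ (n:ℝ))]
  have hεtend : Tendsto εseq atTop (nhds 0) := by
    simp only [hεseq_def]
    exact Tendsto.div_atTop tendsto_const_nhds
      (tendsto_atTop_add_const_right atTop 2 tendsto_natCast_atTop_atTop)
  have hGtendseq : Tendsto (fun n => G (εseq n)) atTop (nhds 0) := by
    have h1 : Tendsto (fun n => ψ (εseq n)) atTop (nhds 0) := by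
      have h2 : Tendsto εseq atTop (nhdsWithin 0 (Set.Ici 0)) :=
        tendsto_nhdsWithin_of_tendsto_nhds_of_eventually_within _ hεtend
          (Eventually.of_forall (fun n => (hεmem n).1.le))
      have h3 := (psi_contWithinAt_zero hα hβ hν0 hνint hψ).tendsto.comp h2
      rwa [hψ0] at h3
    have h2 : ContinuousAt (fun t : ℝ => -Real.log (1 - t / l)) 0 := by
      have hinner : ContinuousAt (fun t : ℝ => 1 - t / l) 0 :=
        (continuous_const.sub (continuous_id.div_const l)).continuousAt
      have hlog : ContinuousAt (fun t : ℝ => Real.log (1 - t / l)) 0 :=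
        ContinuousAt.comp (Real.continuousAt_log (by norm_num)) hinner
      exact hlog.neg
    have h3 := h2.tendsto.comp h1
    have h4 : -Real.log (1 - 0 / l) = 0 := by norm_num
    rw [h4] at h3
    exact h3
  have hG_in : ∀ n : ℕ, 0 < G (εseq n) ∧ G (εseq n) ≤ T := fun n =>
    ⟨hGpos _ (hεmem n).1 (hεmem n).2.le, hGle _ (hεmem n).1.le (hεmem n).2.le⟩
  have hf_int : IntegrableOn f (Set.Ioc 0 T) := by
    refine integrableOn_Ioc_of_intervalIntegral_norm_bounded
      (I := ∫ v in (0:ℝ)..κr, h v) (a := fun n => G (εseq n)) (b := fun _ : ℕ => T)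
      (fun n => ?_) hGtendseq tendsto_const_nhds ?_
    · have hcont : ContinuousOn f (Set.Icc (G (εseq n)) T) := fun x hx =>
        (hf_contAt x (lt_of_lt_of_le (hG_in n).1 hx.1)).continuousWithinAt
      exact hcont.integrableOn_Icc.mono_set Set.Ioc_subset_Icc_self
    · refine Eventually.of_forall (fun n => ?_)
      have hGn_pos := (hG_in n).1
      have hGn_le := (hG_in n).2
      have hnorm : ∫ x in Set.Ioc (G (εseq n)) T, ‖f x‖ = ∫ x in (G (εseq n))..T, f x := by
        rw [intervalIntegral.integral_of_le hGn_le]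
        refine setIntegral_congr_fun measurableSet_Ioc (fun x hx => ?_)
        exact Real.norm_of_nonneg (hf_pos x (lt_trans hGn_pos hx.1)).le
      rw [hnorm, ← hTG, hsubst (εseq n) (hεmem n)]
      have hsplit := intervalIntegral.integral_add_adjacent_intervals
        (hh_ii 0 (εseq n) le_rfl (hεmem n).2.le (hεmem n).1.le)
        (hh_ii (εseq n) κr (hεmem n).1.le le_rfl (hεmem n).2.le)
      have hnn : 0 ≤ ∫ v in (0:ℝ)..(εseq n), h v := by
        apply intervalIntegral.integral_nonneg (hεmem n).1.le
        intro v hv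
        exact hh_nn v hv.1 (hv.2.trans (hεmem n).2.le)
      linarith
  have hf_ii : ∀ a b : ℝ, 0 ≤ a → b ≤ T → a ≤ b → IntervalIntegrable f volume a b := by
    intro a b ha hb hab
    refine (intervalIntegrable_iff_integrableOn_Ioc_of_le hab).2 (hf_int.mono_set ?_)
    exact Set.Ioc_subset_Ioc (by linarith) hb
  have hfprim_cont : ContinuousOn (fun x => ∫ t in (0:ℝ)..x, f t) (Set.Icc 0 T) := by
    have h1 : IntegrableOn f (Set.uIcc 0 T) := by
      rw [Set.uIcc_of_le hT_pos.le, integrableOn_Icc_iff_integrableOn_Ioc]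
      exact hf_int
    have h2 := intervalIntegral.continuousOn_primitive_interval h1
    rwa [Set.uIcc_of_le hT_pos.le] at h2
  have hkey : ∀ n : ℕ, (∫ t in (0:ℝ)..T, f t) - (∫ v in (εseq n)..κr, h v)
      = ∫ t in (0:ℝ)..(G (εseq n)), f t := by
    intro n
    have h1 : IntervalIntegrable f volume 0 (G (εseq n)) :=
      hf_ii 0 _ le_rfl (hG_in n).2 (hG_in n).1.le
    have h2 : IntervalIntegrable f volume (G (εseq n)) T :=
      hf_ii _ T (hG_in n).1.le le_rfl (hG_in n).2
    have h3 := intervalIntegral.integral_add_adjacent_intervals h1 h2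
    have h4 : (∫ x in (G (εseq n))..T, f x) = ∫ v in (εseq n)..κr, h v := by
      rw [← hTG]
      exact hsubst (εseq n) (hεmem n)
    linarith
  have ht1 : Tendsto (fun n => ∫ t in (0:ℝ)..(G (εseq n)), f t) atTop (nhds 0) := by
    have h1 := (hfprim_cont 0 ⟨le_rfl, hT_pos.le⟩).tendsto
    have h2 : Tendsto (fun n => G (εseq n)) atTop (nhdsWithin 0 (Set.Icc 0 T)) :=
      tendsto_nhdsWithin_of_tendsto_nhds_of_eventually_within _ hGtendseq
        (Eventually.of_forall (fun n => ⟨(hG_in n).1.le, (hG_in n).2⟩))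
    have h3 := h1.comp h2
    simpa [Function.comp_def] using h3
  have ht2 : Tendsto (fun n => ∫ v in (εseq n)..κr, h v) atTop (nhds r) := by
    have heq : ∀ n : ℕ, (∫ v in (εseq n)..κr, h v) = Φ κr - Φ (εseq n) := by
      intro n
      have h5 := intervalIntegral.integral_add_adjacent_intervals
        (hh_ii 0 (εseq n) le_rfl (hεmem n).2.le (hεmem n).1.le)
        (hh_ii (εseq n) κr (hεmem n).1.le le_rfl (hεmem n).2.le)
      simp only [hΦ_def]
      linarith
    have hΦε : Tendsto (fun n => Φ (εseq n)) atTop (nhds (Φ 0)) := by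
      have h2 : Tendsto εseq atTop (nhdsWithin 0 (Set.Icc 0 κr)) :=
        tendsto_nhdsWithin_of_tendsto_nhds_of_eventually_within _ hεtend
          (Eventually.of_forall (fun n => ⟨(hεmem n).1.le, (hεmem n).2.le⟩))
      exact ((hΦcont 0 ⟨le_rfl, hκr_pos.le⟩).tendsto).comp h2
    have hΦ0 : Φ 0 = 0 := intervalIntegral.integral_same
    rw [hΦ0] at hΦε
    have h5 : Tendsto (fun n => Φ κr - Φ (εseq n)) atTop (nhds (Φ κr - 0)) :=
      tendsto_const_nhds.sub hΦε
    rw [sub_zero] at h5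
    have h6 := h5.congr (fun n => (heq n).symm)
    rwa [hΦur] at h6
  have hfinal : Tendsto (fun n => (∫ t in (0:ℝ)..T, f t) - (∫ v in (εseq n)..κr, h v)) atTop
      (nhds ((∫ t in (0:ℝ)..T, f t) - r)) := tendsto_const_nhds.sub ht2
  have hfinal2 : Tendsto (fun n => (∫ t in (0:ℝ)..T, f t) - (∫ v in (εseq n)..κr, h v)) atTop
      (nhds 0) := ht1.congr (fun n => (hkey n).symm)
  have hval := tendsto_nhds_unique hfinal hfinal2
  have hgoal : (∫ t in (0:ℝ)..T, f t) = r := by linarith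
  exact hgoal
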